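/- Let M be a compact metric space equipped with a continuous flow φ. A point x ∈ M is chain recurrent if and only if x belongs to no null-class level-set cross-section of φ. (This is the case α = 0 of the paper's theorem that the α-recurrent set is exactly the set of points lying on no partial cross-section cohomologous to α.) -/

import Mathlib

open Set Metric

/-- An `ε`-chain for the flow `ψ`, with respect to the distance function `d`:
a finite sequence of `n ≥ 1` steps with jump times `τ i ≥ 1`, where each jump
`d (ψ (τ i) (p i)) (p (i+1))` has size `< ε`. -/
def IsChainWith {X : Type*} (ψ : ℝ → X → X) (d : X → X → ℝ) (ε : ℝ) (y z : X) : Prop :=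
  ∃ (n : ℕ) (p : ℕ → X) (τ : ℕ → ℝ),
    1 ≤ n ∧ p 0 = y ∧ p n = z ∧ (∀ i < n, 1 ≤ τ i) ∧
    ∀ i < n, d (ψ (τ i) (p i)) (p (i + 1)) < ε

/-- A point is chain recurrent if for every `ε > 0` there is an `ε`-chain from the
point back to itself. -/
def ChainRecPt {M : Type*} [MetricSpace M] (φ : ℝ → M → M) (x : M) : Prop :=
  ∀ ε : ℝ, 0 < ε → IsChainWith φ dist ε x x

/-- `g` is strictly increasing along the flow `φ` on the set `U`: whenever an orbit
segment stays in `U`, the value of `g` strictly increases along it. -/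
def FlowStrictIncrOn {M : Type*} (φ : ℝ → M → M) (g : M → ℝ) (U : Set M) : Prop :=
  ∀ (x : M) (s s' : ℝ), s < s' → (∀ u ∈ Set.Icc s s', φ u x ∈ U) →
    g (φ s x) < g (φ s' x)

/-- A null-class level-set cross-section of the flow `φ`: a nonempty level set
`g⁻¹ {c}` of a continuous real function which is strictly increasing along the flow
on an open set containing the level set. -/
def IsNullLevelSetCS {M : Type*} [TopologicalSpace M] (φ : ℝ → M → M) (S : Set M) : Prop :=
  S.Nonempty ∧ ∃ (g : M → ℝ) (c : ℝ) (U : Set M),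
    Continuous g ∧ S = g ⁻¹' {c} ∧ IsOpen U ∧ S ⊆ U ∧ FlowStrictIncrOn φ g U

section ChainLemmas

variable {X : Type*}

lemma chain_single (ψ : ℝ → X → X) (d : X → X → ℝ) {ε t : ℝ} {y z : X}
    (ht : 1 ≤ t) (h : d (ψ t y) z < ε) : IsChainWith ψ d ε y z := by
  refine ⟨1, fun i => if i = 0 then y else z, fun _ => t, le_refl 1, if_pos rfl,
    if_neg one_ne_zero, fun _ _ => ht, ?_⟩
  intro i hi
  interval_cases i
  simpa using h

lemma chain_append (ψ : ℝ → X → X) (d : X → X → ℝ) {δ ε t : ℝ} {x y z : X}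
    (hc : IsChainWith ψ d δ x y) (hδε : δ ≤ ε) (ht : 1 ≤ t) (h : d (ψ t y) z < ε) :
    IsChainWith ψ d ε x z := by
  obtain ⟨n, p, τ, hn, hp0, hpn, hτ, hjump⟩ := hc
  refine ⟨n + 1, fun i => if i ≤ n then p i else z, fun i => if i < n then τ i else t,
    le_trans hn (Nat.le_succ n), ?_, ?_, ?_, ?_⟩
  · simp [hp0]
  · simp
  · intro i _
    by_cases hi : i < n
    · simpa [hi] using hτ i hi
    · simp only [if_neg hi]; exact ht
  · intro i hi
    by_cases hin : i < n
    · have h1 : i ≤ n := le_of_lt hin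
      have h2 : i + 1 ≤ n := hin
      simp only [if_pos h1, if_pos h2, if_pos hin]
      exact lt_of_lt_of_le (hjump i hin) hδε
    · have hieq : i = n := by omega
      subst hieq
      simp only [if_neg hin, if_pos (le_refl i), if_neg (by omega : ¬ i + 1 ≤ i), hpn]
      exact h

lemma chain_mod_last (ψ : ℝ → X → X) (d : X → X → ℝ)
    (hadd : ∀ (s t : ℝ) (x : X), ψ (s + t) x = ψ s (ψ t x)) {δ ε t : ℝ} {x y w : X}
    (hc : IsChainWith ψ d δ x y) (hδε : δ ≤ ε) (ht : 0 ≤ t)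
    (hmod : ∀ a : X, d a y < δ → d (ψ t a) w < ε) :
    IsChainWith ψ d ε x w := by
  obtain ⟨n, p, τ, hn, hp0, hpn, hτ, hjump⟩ := hc
  refine ⟨n, fun i => if i = n then w else p i, fun i => if i + 1 = n then t + τ i else τ i,
    hn, ?_, ?_, ?_, ?_⟩
  · simp only [if_neg (by omega : ¬ (0:ℕ) = n)]; exact hp0
  · simp
  · intro i hi
    by_cases h1 : i + 1 = n
    · simp only [if_pos h1]; linarith [hτ i hi]
    · simp only [if_neg h1]; exact hτ i hi
  · intro i hi
    have hpi : (if i = n then w else p i) = p i := if_neg (by omega)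
    by_cases h1 : i + 1 = n
    · simp only [if_pos h1, hpi, hadd]
      apply hmod
      have h2 := hjump i hi
      rwa [h1, hpn] at h2
    · simp only [if_neg h1, hpi]
      exact lt_of_lt_of_le (hjump i hi) hδε

lemma chain_open {M : Type*} [MetricSpace M] (ψ : ℝ → M → M) {δ : ℝ} {x y : M}
    (hc : IsChainWith ψ dist δ x y) :
    ∃ r > 0, ∀ z, dist y z < r → IsChainWith ψ dist δ x z := by
  obtain ⟨n, p, τ, hn, hp0, hpn, hτ, hjump⟩ := hc
  obtain ⟨m, rfl⟩ : ∃ m, n = m + 1 := ⟨n - 1, by omega⟩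
  have hlast := hjump m (by omega)
  refine ⟨δ - dist (ψ (τ m) (p m)) (p (m + 1)), by linarith, ?_⟩
  intro z hz
  refine ⟨m + 1, fun i => if i = m + 1 then z else p i, τ, hn, ?_, ?_, hτ, ?_⟩
  · simp only [if_neg (by omega : ¬ (0:ℕ) = m + 1)]; exact hp0
  · simp
  · intro i hi
    have hpi : (if i = m + 1 then z else p i) = p i := if_neg (by omega)
    by_cases h1 : i + 1 = m + 1
    · have him : i = m := by omega
      subst him
      simp only [if_pos h1, hpi]
      calc dist (ψ (τ i) (p i)) z ≤ dist (ψ (τ i) (p i)) (p (i + 1)) + dist (p (i + 1)) z :=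
            dist_triangle _ _ _
        _ < δ := by rw [hpn] at *; linarith [hz]
    · simp only [if_neg h1, hpi]
      exact hjump i hi

end ChainLemmas

section Forward

theorem forward_dir {M : Type*} [MetricSpace M] [CompactSpace M]
    (φ : ℝ → M → M)
    (hφc : Continuous fun p : ℝ × M => φ p.1 p.2)
    (hφ0 : ∀ x : M, φ 0 x = x)
    (hφadd : ∀ (s t : ℝ) (x : M), φ (s + t) x = φ s (φ t x))
    (x : M) (hcr : ChainRecPt φ x) (S : Set M) (hS : IsNullLevelSetCS φ S) : x ∉ S := by
  intro hxS
  obtain ⟨hSne, g, c, U, hg, hSdef, hU, hSU, hinc⟩ := hS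
  have hgx : g x = c := by rw [hSdef] at hxS; exact hxS
  have contφy : ∀ y : M, Continuous fun t : ℝ => φ t y := fun y =>
    hφc.comp (continuous_id.prodMk continuous_const)
  -- Claim 1 : the superlevel set {g ≥ c} is forward invariant
  have claim1 : ∀ y : M, c ≤ g y → ∀ t : ℝ, 0 ≤ t → c ≤ g (φ t y) := by
    intro y hy t ht
    by_contra hlt
    push_neg at hlt
    have hgcont : Continuous fun s : ℝ => g (φ s y) := hg.comp (contφy y)
    set A : Set ℝ := Icc 0 t ∩ {s | c ≤ g (φ s y)} with hA
    have hAne : A.Nonempty := ⟨0, ⟨le_refl 0, ht⟩, by simpa [hφ0] using hy⟩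
    have hAcomp : IsCompact A := isCompact_Icc.inter_right (isClosed_le continuous_const hgcont)
    have hσA : sSup A ∈ A := hAcomp.sSup_mem hAne
    set σ := sSup A with hσdef
    obtain ⟨⟨hσ0, hσt⟩, hσc⟩ := hσA
    have hσlt : σ < t := by
      rcases lt_or_eq_of_le hσt with h | h
      · exact h
      · exfalso; rw [h] at hσc; exact absurd hσc (not_le.mpr hlt)
    have hσc' : c ≤ g (φ σ y) := hσc
    rcases eq_or_lt_of_le hσc' with heq | hstrict
    · have hmem : φ σ y ∈ U := hSU (by rw [hSdef]; exact heq.symm)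
      have hopen : IsOpen {s : ℝ | φ s y ∈ U} := hU.preimage (contφy y)
      obtain ⟨r, hr, hball⟩ := Metric.isOpen_iff.mp hopen σ hmem
      set s' := min (σ + r / 2) t with hs'
      have hσs' : σ < s' := lt_min (by linarith) hσlt
      have hseg : ∀ v ∈ Icc σ s', φ v y ∈ U := by
        intro v hv
        apply hball
        rw [mem_ball, Real.dist_eq, abs_lt]
        have hvu : v ≤ σ + r / 2 := le_trans hv.2 (min_le_left _ _)
        constructor <;> [linarith [hv.1]; linarith]
      have hlt2 := hinc y σ s' hσs' hseg
      have hs'A : s' ∈ A := ⟨⟨le_trans hσ0 (le_of_lt hσs'), min_le_right _ _⟩,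
        by show c ≤ g (φ s' y); linarith [heq ▸ hlt2]⟩
      exact absurd (le_csSup hAcomp.bddAbove hs'A) (not_le.mpr hσs')
    · have hopen : IsOpen {s : ℝ | c < g (φ s y)} := isOpen_lt continuous_const hgcont
      obtain ⟨r, hr, hball⟩ := Metric.isOpen_iff.mp hopen σ hstrict
      set s' := min (σ + r / 2) t with hs'
      have hσs' : σ < s' := lt_min (by linarith) hσlt
      have hmem : c < g (φ s' y) := by
        apply hball
        rw [mem_ball, Real.dist_eq, abs_lt]
        have hvu : s' ≤ σ + r / 2 := min_le_left _ _
        constructor <;> [linarith [le_of_lt hσs']; linarith]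
      have hs'A : s' ∈ A := ⟨⟨le_trans hσ0 (le_of_lt hσs'), min_le_right _ _⟩, le_of_lt hmem⟩
      exact absurd (le_csSup hAcomp.bddAbove hs'A) (not_le.mpr hσs')
  -- Claim 2 : strict increase strictly after time 0
  have claim2 : ∀ y : M, c ≤ g y → ∀ t : ℝ, 0 < t → c < g (φ t y) := by
    intro y hy t ht
    rcases lt_or_eq_of_le (claim1 y hy t ht.le) with h | h
    · exact h
    · exfalso
      have hmem : φ t y ∈ U := hSU (by rw [hSdef]; exact h.symm)
      obtain ⟨r, hr, hball⟩ := Metric.isOpen_iff.mp (hU.preimage (contφy y)) t hmem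
      obtain ⟨s, hs⟩ : ∃ s : ℝ, s = t - min (r / 2) (t / 2) := ⟨_, rfl⟩
      have hminl : min (r / 2) (t / 2) ≤ r / 2 := min_le_left _ _
      have hminr : min (r / 2) (t / 2) ≤ t / 2 := min_le_right _ _
      have hmin : 0 < min (r / 2) (t / 2) := lt_min (by linarith) (by linarith)
      have hst : s < t := by rw [hs]; linarith
      have hs0 : 0 ≤ s := by rw [hs]; linarith
      have hseg : ∀ v ∈ Icc s t, φ v y ∈ U := by
        intro v hv
        apply hball
        rw [mem_ball, Real.dist_eq, abs_lt]
        have h1 : s ≤ v := hv.1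
        have h2 : v ≤ t := hv.2
        rw [hs] at h1
        constructor <;> [linarith; linarith]
      have hlt2 := hinc y s t hst hseg
      have h1 := claim1 y hy s hs0
      rw [← h] at hlt2
      linarith
  -- Claim 4 : uniform push after time 1
  obtain ⟨β, hβ, hpush⟩ : ∃ β > 0, ∀ y : M, c ≤ g y → c + β ≤ g (φ 1 y) := by
    set C := {y : M | c ≤ g y} with hC
    have hCc : IsCompact C := (isClosed_le continuous_const hg).isCompact
    have hCne : C.Nonempty := ⟨x, le_of_eq hgx.symm⟩
    have hcont : ContinuousOn (fun y => g (φ 1 y)) C :=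
      (hg.comp (hφc.comp (continuous_const.prodMk continuous_id))).continuousOn
    obtain ⟨y₀, hy₀C, hy₀min⟩ := hCc.exists_isMinOn hCne hcont
    refine ⟨g (φ 1 y₀) - c, by linarith [claim2 y₀ hy₀C 1 one_pos], ?_⟩
    intro y hy
    have := isMinOn_iff.mp hy₀min y hy
    linarith
  -- uniform continuity of g
  obtain ⟨ε, hε, hgu⟩ : ∃ ε > 0, ∀ a b : M, dist a b < ε → |g a - g b| < β := by
    have huc := CompactSpace.uniformContinuous_of_continuous hg
    rcases Metric.uniformContinuous_iff.mp huc β hβ with ⟨ε, hε, hd⟩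
    exact ⟨ε, hε, fun a b hab => by rw [← Real.dist_eq]; exact hd hab⟩
  -- the chain and the contradiction
  obtain ⟨n, p, τ, hn, hp0, hpn, hτ, hjump⟩ := hcr ε hε
  have step : ∀ i, i < n → c ≤ g (p i) → c < g (p (i + 1)) := by
    intro i hi hgi
    have hτ1 := hτ i hi
    have h1 : c ≤ g (φ (τ i - 1) (p i)) := claim1 _ hgi _ (by linarith)
    have h2 : c + β ≤ g (φ 1 (φ (τ i - 1) (p i))) := hpush _ h1
    have h3 : φ 1 (φ (τ i - 1) (p i)) = φ (τ i) (p i) := by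
      rw [← hφadd]
      congr 1
      ring
    rw [h3] at h2
    have h4 := hgu _ _ (hjump i hi)
    have h5 := abs_lt.mp h4
    linarith [h5.1]
  have all : ∀ i, i ≤ n → c ≤ g (p i) := by
    intro i
    induction i with
    | zero => intro _; rw [hp0, hgx]
    | succ k ih =>
      intro hk
      exact (step k (by omega) (ih (by omega))).le
  have final : c < g (p n) := by
    obtain ⟨m, rfl⟩ : ∃ m, n = m + 1 := ⟨n - 1, by omega⟩
    exact step m (by omega) (all m (by omega))
  rw [hpn, hgx] at final
  exact lt_irrefl c final

end Forward


section Backward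

theorem backward_dir {M : Type*} [MetricSpace M] [CompactSpace M]
    (φ : ℝ → M → M)
    (hφc : Continuous fun p : ℝ × M => φ p.1 p.2)
    (hφ0 : ∀ x : M, φ 0 x = x)
    (hφadd : ∀ (s t : ℝ) (x : M), φ (s + t) x = φ s (φ t x))
    (x : M) (hncr : ¬ ChainRecPt φ x) :
    ∃ S : Set M, IsNullLevelSetCS φ S ∧ x ∈ S := by
  unfold ChainRecPt at hncr
  push_neg at hncr
  obtain ⟨ε, hε, hnc⟩ := hncr
  have contφy : ∀ y : M, Continuous fun t : ℝ => φ t y := fun y =>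
    hφc.comp (continuous_id.prodMk continuous_const)
  have contφt : ∀ t : ℝ, Continuous fun y : M => φ t y := fun t =>
    hφc.comp (continuous_const.prodMk continuous_id)
  have flow_cancel : ∀ (s : ℝ) (z : M), φ s (φ (-s) z) = z := by
    intro s z
    rw [← hφadd, add_neg_cancel, hφ0]
  have flow_cancel' : ∀ (s : ℝ) (z : M), φ (-s) (φ s z) = z := by
    intro s z
    rw [← hφadd, neg_add_cancel, hφ0]
  -- uniform continuity of the time-[0,1] flow
  obtain ⟨δ₀, hδ₀, hδ₀prop⟩ : ∃ δ > 0, ∀ t ∈ Icc (0:ℝ) 1, ∀ p q : M, dist p q < δ →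
      dist (φ t p) (φ t q) < ε / 2 := by
    have hcomp : IsCompact (Icc (0:ℝ) 1 ×ˢ (univ : Set M)) := isCompact_Icc.prod isCompact_univ
    have huc := hcomp.uniformContinuousOn_of_continuous hφc.continuousOn
    rcases Metric.uniformContinuousOn_iff.mp huc (ε / 2) (by linarith) with ⟨δ, hδ, hd⟩
    refine ⟨δ, hδ, fun t ht p q hpq => ?_⟩
    have := hd (t, p) ⟨ht, mem_univ _⟩ (t, q) ⟨ht, mem_univ _⟩ ?_
    · exact this
    · rw [Prod.dist_eq]
      simp only [dist_self]
      rw [max_eq_right dist_nonneg]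
      exact hpq
  obtain ⟨δ, hδpos, hδε2, hδ₀le⟩ : ∃ δ : ℝ, 0 < δ ∧ δ ≤ ε / 2 ∧ δ ≤ δ₀ :=
    ⟨min δ₀ (ε / 2), lt_min hδ₀ (by linarith), min_le_right _ _, min_le_left _ _⟩
  have hδprop : ∀ t ∈ Icc (0:ℝ) 1, ∀ p q : M, dist p q < δ → dist (φ t p) (φ t q) < ε / 2 :=
    fun t ht p q hpq => hδ₀prop t ht p q (lt_of_lt_of_le hpq hδ₀le)
  -- the chain set and its orbit saturation
  set Om : Set M := {y | IsChainWith φ dist δ x y} with hOmdef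
  set Oh : Set M := ⋃ (t : ℝ) (_ : 0 ≤ t), (fun z => φ (-t) z) ⁻¹' Om with hOhdef
  set K : Set M := closure Oh with hKdef
  have hOmOh : Om ⊆ Oh := by
    intro y hy
    apply mem_iUnion₂.mpr
    refine ⟨0, le_refl 0, ?_⟩
    show φ (-0) y ∈ Om
    rw [neg_zero, hφ0]
    exact hy
  have hOhmem : ∀ z ∈ Oh, ∃ t : ℝ, 0 ≤ t ∧ φ (-t) z ∈ Om ∧ φ t (φ (-t) z) = z := by
    intro z hz
    rcases mem_iUnion₂.mp hz with ⟨t, ht, hzt⟩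
    exact ⟨t, ht, hzt, flow_cancel t z⟩
  have hOmOpen : IsOpen Om := by
    rw [Metric.isOpen_iff]
    intro y hy
    obtain ⟨r, hr, hball⟩ := chain_open φ hy
    exact ⟨r, hr, fun z hz => hball z (by rw [dist_comm]; exact mem_ball.mp hz)⟩
  have hOhOpen : IsOpen Oh :=
    isOpen_iUnion fun t => isOpen_iUnion fun _ => hOmOpen.preimage (contφt (-t))
  have hOhInv : ∀ s : ℝ, 0 ≤ s → ∀ z ∈ Oh, φ s z ∈ Oh := by
    intro s hs z hz
    rcases mem_iUnion₂.mp hz with ⟨t, ht, hzt⟩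
    apply mem_iUnion₂.mpr
    refine ⟨t + s, by linarith, ?_⟩
    show φ (-(t + s)) (φ s z) ∈ Om
    have heq : φ (-(t + s)) (φ s z) = φ (-t) z := by
      rw [← hφadd]
      congr 1
      ring
    rwa [heq]
  have hKInv : ∀ s : ℝ, 0 ≤ s → ∀ z ∈ K, φ s z ∈ K := by
    intro s hs z hz
    have h1 : φ s z ∈ (fun w => φ s w) '' closure Oh := ⟨z, hz, rfl⟩
    have h2 := image_closure_subset_closure_image (contφt s) h1
    refine closure_mono ?_ h2
    rintro w ⟨a, ha, rfl⟩
    exact hOhInv s hs a ha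
  have hxorbit : ∀ t : ℝ, 1 ≤ t → φ t x ∈ Om := fun t ht =>
    chain_single φ dist ht (by rw [dist_self]; exact hδpos)
  -- points of K flow into Om after time ≥ 1
  have hKchain : ∀ z ∈ K, ∀ t : ℝ, 1 ≤ t → φ t z ∈ Om := by
    intro z hz t ht
    have hcont : ContinuousAt (fun w => φ t w) z := (contφt t).continuousAt
    rcases Metric.continuousAt_iff.mp hcont δ hδpos with ⟨r, hr, hball⟩
    rcases Metric.mem_closure_iff.mp hz r hr with ⟨z', hz', hdz⟩
    obtain ⟨s, hs, hmem, hts⟩ := hOhmem z' hz'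
    apply chain_append φ dist hmem (le_refl δ) (t := t + s) (by linarith)
    have heq : φ (t + s) (φ (-s) z') = φ t z' := by
      rw [hφadd t s, flow_cancel]
    rw [heq]
    have : dist z' z < r := by rwa [dist_comm] at hdz
    exact hball this
  -- x is not in K
  have hxK : x ∉ K := by
    intro hxK
    rcases Metric.mem_closure_iff.mp hxK δ hδpos with ⟨z, hzOh, hxz⟩
    obtain ⟨t, ht, hmem, hts⟩ := hOhmem z hzOh
    by_cases h1 : 1 ≤ t
    · apply hnc
      apply chain_append φ dist hmem (by linarith) h1
      rw [hts, dist_comm]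
      linarith
    · push_neg at h1
      apply hnc
      apply chain_mod_last φ dist hφadd hmem (by linarith) ht
      intro a hay
      calc dist (φ t a) x ≤ dist (φ t a) (φ t (φ (-t) z)) + dist (φ t (φ (-t) z)) x :=
            dist_triangle _ _ _
        _ < ε / 2 + ε / 2 := by
            apply add_lt_add
            · exact hδprop t ⟨ht, le_of_lt h1⟩ _ _ hay
            · rw [hts, dist_comm]; linarith
        _ = ε := by ring
  have hKclosed : IsClosed K := isClosed_closure
  have hKcomp : IsCompact K := hKclosed.isCompact
  have hKne : K.Nonempty := ⟨φ 1 x, subset_closure (hOmOh (hxorbit 1 le_rfl))⟩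
  have hd₀ : 0 < infDist x K := (hKclosed.notMem_iff_infDist_pos hKne).mp hxK
  -- tube: points near K flow into Oh after time ≥ 1
  obtain ⟨ρ, hρpos, hρ⟩ : ∃ ρ > 0, ∀ z : M, infDist z K < ρ → ∀ t : ℝ, 1 ≤ t → φ t z ∈ Oh := by
    have hC : IsCompact ((fun z => φ 1 z) '' K) := hKcomp.image (contφt 1)
    have hCsub : (fun z => φ 1 z) '' K ⊆ Oh := by
      rintro - ⟨z, hz, rfl⟩
      exact hOmOh (hKchain z hz 1 le_rfl)
    obtain ⟨r, hr, hthick⟩ := hC.exists_thickening_subset_open hOhOpen hCsub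
    have huc := CompactSpace.uniformContinuous_of_continuous (contφt 1)
    rcases Metric.uniformContinuous_iff.mp huc r hr with ⟨ρ, hρ, hball⟩
    refine ⟨ρ, hρ, fun z hz t ht => ?_⟩
    obtain ⟨w, hwK, hwz⟩ := (Metric.infDist_lt_iff hKne).mp hz
    have h1 : φ 1 z ∈ Oh := by
      apply hthick
      rw [Metric.mem_thickening_iff]
      exact ⟨φ 1 w, ⟨w, hwK, rfl⟩, hball hwz⟩
    have h2 : φ t z = φ (t - 1) (φ 1 z) := by
      rw [← hφadd]
      congr 1
      ring
    rw [h2]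
    exact hOhInv (t - 1) (by linarith) _ h1
  -- the bump function u
  obtain ⟨a, haρ, had₀, hapos⟩ : ∃ a : ℝ, a ≤ ρ ∧ a ≤ infDist x K / 2 ∧ 0 < a :=
    ⟨min ρ (infDist x K / 2), min_le_left _ _, min_le_right _ _,
      lt_min hρpos (by linarith)⟩
  set u : M → ℝ := fun z => max 0 (1 - infDist z K / a) with hudef
  have hucont : Continuous u :=
    continuous_const.max (continuous_const.sub ((continuous_infDist_pt K).div_const a))
  have hu0 : ∀ z, 0 ≤ u z := fun z => le_max_left _ _
  have hu1 : ∀ z, u z ≤ 1 := by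
    intro z
    apply max_le (by norm_num)
    have : 0 ≤ infDist z K / a := div_nonneg infDist_nonneg hapos.le
    linarith
  have huK : ∀ z ∈ K, u z = 1 := by
    intro z hz
    rw [hudef]
    simp only [infDist_zero_of_mem hz, zero_div, sub_zero]
    exact max_eq_right (by norm_num)
  have hu_far : ∀ z : M, a ≤ infDist z K → u z = 0 := by
    intro z hz
    rw [hudef]
    simp only
    apply max_eq_left
    have : 1 ≤ infDist z K / a := (one_le_div hapos).mpr hz
    linarith
  have hu_pos : ∀ z : M, 0 < u z → infDist z K < a := by
    intro z hz
    by_contra hge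
    push_neg at hge
    rw [hu_far z hge] at hz
    exact lt_irrefl 0 hz
  have hu_eq1 : ∀ z : M, u z = 1 → z ∈ K := by
    intro z hz
    have h1 : infDist z K ≤ 0 := by
      by_contra hpos
      push_neg at hpos
      have h2 : 1 - infDist z K / a < 1 := by
        have : 0 < infDist z K / a := div_pos hpos hapos
        linarith
      have h3 : u z < 1 := by
        rw [hudef]
        exact max_lt (by norm_num) h2
      rw [hz] at h3
      exact lt_irrefl 1 h3
    have h2 : infDist z K = 0 := le_antisymm h1 infDist_nonneg
    exact (hKclosed.mem_iff_infDist_zero hKne).mpr h2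
  have huKorbit : ∀ z ∈ K, ∀ t : ℝ, 0 ≤ t → u (φ t z) = 1 := fun z hz t ht =>
    huK _ (hKInv t ht z hz)
  have hux1 : ∀ t : ℝ, 1 ≤ t → u (φ t x) = 1 := fun t ht =>
    huK _ (subset_closure (hOmOh (hxorbit t ht)))
  -- small time interval where u vanishes along the orbit of x
  obtain ⟨η, hη0, hη1, hηprop⟩ : ∃ η : ℝ, 0 < η ∧ η ≤ 1 ∧
      ∀ t ∈ Icc (0:ℝ) η, u (φ t x) = 0 := by
    have hcont : Continuous fun t : ℝ => infDist (φ t x) K :=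
      (continuous_infDist_pt K).comp (contφy x)
    have hopen : IsOpen {t : ℝ | a < infDist (φ t x) K} := isOpen_lt continuous_const hcont
    have h0 : (0:ℝ) ∈ {t : ℝ | a < infDist (φ t x) K} := by
      show a < infDist (φ 0 x) K
      rw [hφ0]
      linarith
    obtain ⟨r, hr, hball⟩ := Metric.isOpen_iff.mp hopen 0 h0
    refine ⟨min (r / 2) 1, lt_min (by linarith) one_pos, min_le_right _ _, ?_⟩
    intro t ht
    have htr : t < r := by
      have h1 := ht.2
      have h2 : min (r / 2) 1 ≤ r / 2 := min_le_left _ _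
      linarith
    have : a < infDist (φ t x) K := by
      apply hball
      rw [mem_ball, Real.dist_eq, sub_zero, abs_lt]
      constructor <;> [linarith [ht.1]; linarith]
    exact hu_far _ this.le
  -- the Lyapunov function g
  set g : M → ℝ := fun y => ∫ t in (0:ℝ)..3, u (φ t y) with hgdef
  have hwcont : ∀ y : M, Continuous fun t : ℝ => u (φ t y) := fun y => hucont.comp (contφy y)
  have hwint : ∀ (y : M) (s s' : ℝ),
      IntervalIntegrable (fun t => u (φ t y)) MeasureTheory.volume s s' :=
    fun y s s' => (hwcont y).intervalIntegrable _ _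
  have hgcont : Continuous g := by
    have hcont2 : Continuous (Function.uncurry fun (y : M) (t : ℝ) => u (φ t y)) := by
      apply hucont.comp
      exact hφc.comp (continuous_snd.prodMk continuous_fst)
    exact intervalIntegral.continuous_parametric_intervalIntegral_of_continuous' hcont2 0 3
  set c : ℝ := g x with hcdef
  -- bounds for c
  have hc2 : 2 ≤ c := by
    have h13 : (∫ t in (1:ℝ)..3, u (φ t x)) = 2 := by
      rw [intervalIntegral.integral_congr (g := fun _ => (1:ℝ))
        (fun t ht => by
          rw [uIcc_of_le (by norm_num : (1:ℝ) ≤ 3)] at ht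
          exact hux1 t ht.1)]
      norm_num
    have h01 : 0 ≤ ∫ t in (0:ℝ)..1, u (φ t x) :=
      intervalIntegral.integral_nonneg (by norm_num) (fun t _ => hu0 _)
    have hadd := intervalIntegral.integral_add_adjacent_intervals (hwint x 0 1) (hwint x 1 3)
    show 2 ≤ ∫ t in (0:ℝ)..3, u (φ t x)
    rw [← hadd]
    linarith
  have hcη : c ≤ 3 - η := by
    have h0η : (∫ t in (0:ℝ)..η, u (φ t x)) = 0 := by
      rw [intervalIntegral.integral_congr (g := fun _ => (0:ℝ))
        (fun t ht => by
          rw [uIcc_of_le hη0.le] at ht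
          exact hηprop t ht)]
      simp
    have hη3 : (∫ t in η..(3:ℝ), u (φ t x)) ≤ 3 - η := by
      have hmono := intervalIntegral.integral_mono_on (by linarith : η ≤ (3:ℝ))
        (hwint x η 3) (continuous_const.intervalIntegrable η 3)
        (fun t _ => hu1 (φ t x))
      simpa using hmono
    have hadd := intervalIntegral.integral_add_adjacent_intervals (hwint x 0 η) (hwint x η 3)
    show (∫ t in (0:ℝ)..3, u (φ t x)) ≤ 3 - η
    rw [← hadd]
    linarith
  -- g = 3 on K
  have hgK : ∀ y ∈ K, g y = 3 := by
    intro y hy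
    show (∫ t in (0:ℝ)..3, u (φ t y)) = 3
    rw [intervalIntegral.integral_congr (g := fun _ => (1:ℝ))
      (fun t ht => by
        rw [uIcc_of_le (by norm_num : (0:ℝ) ≤ 3)] at ht
        exact huKorbit y hy t ht.1)]
    norm_num
  -- the open set U
  set U : Set M := {z | u z < 1} ∩ (fun z => φ 3 z) ⁻¹' Oh with hUdef
  have hUopen : IsOpen U :=
    (isOpen_lt hucont continuous_const).inter (hOhOpen.preimage (contφt 3))
  -- the level set is inside U
  have hlevel : ∀ y : M, g y = c → y ∈ U := by
    intro y hy
    constructor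
    · show u y < 1
      rcases lt_or_eq_of_le (hu1 y) with h | h
      · exact h
      · exfalso
        have h3 := hgK y (hu_eq1 y h)
        rw [hy] at h3
        linarith
    · show φ 3 y ∈ Oh
      by_contra hnot
      have hzero : ∀ t ∈ Icc (0:ℝ) 2, u (φ t y) = 0 := by
        intro t ht
        by_contra hne
        have hpos : 0 < u (φ t y) := lt_of_le_of_ne (hu0 _) (Ne.symm hne)
        apply hnot
        have h3 : φ 3 y = φ (3 - t) (φ t y) := by
          rw [← hφadd]
          congr 1
          ring
        rw [h3]
        exact hρ _ (lt_of_lt_of_le (hu_pos _ hpos) haρ) (3 - t) (by linarith [ht.2])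
      have h02 : (∫ t in (0:ℝ)..2, u (φ t y)) = 0 := by
        rw [intervalIntegral.integral_congr (g := fun _ => (0:ℝ))
          (fun t ht => by
            rw [uIcc_of_le (by norm_num : (0:ℝ) ≤ 2)] at ht
            exact hzero t ht)]
        simp
      have h23 : (∫ t in (2:ℝ)..3, u (φ t y)) ≤ 1 := by
        have hmono := intervalIntegral.integral_mono_on (by norm_num : (2:ℝ) ≤ 3)
          (hwint y 2 3) (continuous_const.intervalIntegrable 2 3)
          (fun t _ => hu1 (φ t y))
        have h23' : (∫ t in (2:ℝ)..3, u (φ t y)) ≤ 3 - 2 := by simpa using hmono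
        linarith
      have hadd := intervalIntegral.integral_add_adjacent_intervals (hwint y 0 2) (hwint y 2 3)
      have hgy : g y ≤ 1 := by
        show (∫ t in (0:ℝ)..3, u (φ t y)) ≤ 1
        rw [← hadd]
        linarith
      rw [hy] at hgy
      linarith
  -- x belongs to U
  have hxU : x ∈ U := by
    constructor
    · show u x < 1
      have h1 : a ≤ infDist x K := by linarith
      rw [hu_far x h1]
      norm_num
    · exact hOmOh (hxorbit 3 (by norm_num))
  -- strict monotonicity along the flow on U
  have hincr : FlowStrictIncrOn φ g U := by
    intro y s s' hss hseg
    have hwc : Continuous fun t : ℝ => u (φ t y) := hwcont y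
    have hGrep : ∀ σ : ℝ, g (φ σ y) =
        (∫ t in (0:ℝ)..(σ + 3), u (φ t y)) - ∫ t in (0:ℝ)..σ, u (φ t y) := by
      intro σ
      have h1 : (∫ t in (0:ℝ)..3, u (φ t (φ σ y))) = ∫ t in (0:ℝ)..3, u (φ (t + σ) y) := by
        apply intervalIntegral.integral_congr
        intro t _
        show u (φ t (φ σ y)) = u (φ (t + σ) y)
        rw [← hφadd]
      show (∫ t in (0:ℝ)..3, u (φ t (φ σ y))) = _
      rw [h1, intervalIntegral.integral_comp_add_right (fun t => u (φ t y)) σ, zero_add]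
      have hadd := intervalIntegral.integral_add_adjacent_intervals
        (hwint y 0 σ) (hwint y σ (3 + σ))
      have h3 : (3:ℝ) + σ = σ + 3 := by ring
      rw [h3] at hadd ⊢
      linarith
    have hderiv : ∀ σ : ℝ, HasDerivAt (fun σ => g (φ σ y))
        (u (φ (σ + 3) y) - u (φ σ y)) σ := by
      intro σ
      have hF1 : HasDerivAt (fun σ : ℝ => ∫ t in (0:ℝ)..σ, u (φ t y)) (u (φ σ y)) σ :=
        (hwc.integral_hasStrictDerivAt 0 σ).hasDerivAt
      have hF2 : HasDerivAt (fun σ : ℝ => ∫ t in (0:ℝ)..(σ + 3), u (φ t y))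
          (u (φ (σ + 3) y)) σ := by
        have hF3 : HasDerivAt (fun w : ℝ => ∫ t in (0:ℝ)..w, u (φ t y))
            (u (φ (σ + 3) y)) (σ + 3) :=
          (hwc.integral_hasStrictDerivAt 0 (σ + 3)).hasDerivAt
        have hid : HasDerivAt (fun σ : ℝ => σ + 3) 1 σ := (hasDerivAt_id σ).add_const 3
        have := hF3.comp σ hid
        simpa [Function.comp_def] using this
      have hsub := hF2.sub hF1
      have heq : (fun σ : ℝ => g (φ σ y)) = fun σ : ℝ =>
          (∫ t in (0:ℝ)..(σ + 3), u (φ t y)) - ∫ t in (0:ℝ)..σ, u (φ t y) := funext hGrep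
      rw [heq]
      exact hsub
    have hmono : StrictMonoOn (fun σ => g (φ σ y)) (Icc s s') := by
      apply strictMonoOn_of_deriv_pos (convex_Icc s s')
      · exact (hgcont.comp (contφy y)).continuousOn
      · intro σ hσ
        rw [interior_Icc] at hσ
        rw [(hderiv σ).deriv]
        have hσIcc : σ ∈ Icc s s' := ⟨hσ.1.le, hσ.2.le⟩
        obtain ⟨hu_lt, hOh3⟩ := hseg σ hσIcc
        have h1 : u (φ (σ + 3) y) = 1 := by
          have heq : φ (σ + 3) y = φ 3 (φ σ y) := by
            rw [← hφadd]
            congr 1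
            ring
          rw [heq]
          exact huK _ (subset_closure hOh3)
        rw [h1]
        have : u (φ σ y) < 1 := hu_lt
        linarith
    exact hmono (left_mem_Icc.mpr hss.le) (right_mem_Icc.mpr hss.le) hss
  -- assemble
  refine ⟨g ⁻¹' {c}, ⟨⟨x, rfl⟩, g, c, U, hgcont, rfl, hUopen, ?_, hincr⟩, rfl⟩
  intro y hy
  exact hlevel y hy

end Backward

theorem chainRecPt_iff_mem_no_nullCrossSection
    {M : Type*} [MetricSpace M] [CompactSpace M]
    (φ : ℝ → M → M)
    (hφc : Continuous fun p : ℝ × M => φ p.1 p.2)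
    (hφ0 : ∀ x : M, φ 0 x = x)
    (hφadd : ∀ (s t : ℝ) (x : M), φ (s + t) x = φ s (φ t x))
    (x : M) :
    ChainRecPt φ x ↔ ∀ S : Set M, IsNullLevelSetCS φ S → x ∉ S := by
  constructor
  · intro hcr S hS
    exact forward_dir φ hφc hφ0 hφadd x hcr S hS
  · intro h
    by_contra hcr
    obtain ⟨S, hS, hxS⟩ := backward_dir φ hφc hφ0 hφadd x hcr
    exact h S hS hxS
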